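/- Let n ≥ 2 be an integer and x = (x_1,…,x_n) ∈ ℝ^n. Then the posterior probability of one cluster satisfies p(T_n = 1 | x) ≤ 1 / ( 1 + (1/(2√2)) exp( −x̄_n² / 2 ) ), where x̄_n = (1/n) ∑_{j=1}^n x_j. -/

import Mathlib

open MeasureTheory Filter Finset

/-- The standard normal density `φ(u) = (2π)^{-1/2} exp(-u²/2)`. -/
noncomputable def stdNormalPDF (u : ℝ) : ℝ :=
  (Real.sqrt (2 * Real.pi))⁻¹ * Real.exp (-u ^ 2 / 2)

/-- The single-cluster marginal `m(x_S)` of a unit-variance normal component with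
standard normal prior on the mean, in closed form. -/
noncomputable def clusterMarginal {n : ℕ} (x : Fin n → ℝ) (S : Finset (Fin n)) : ℝ :=
  (Real.sqrt (S.card + 1))⁻¹ * (∏ j ∈ S, stdNormalPDF (x j)) *
    Real.exp ((∑ j ∈ S, x j) ^ 2 / (2 * (S.card + 1)))

/-- The set `𝒜_t(n)` of ordered partitions `(A_1, …, A_t)` of `{1,…,n}` into `t`
nonempty disjoint sets. -/
def orderedPartitions (n t : ℕ) : Finset (Fin t → Finset (Fin n)) :=
  Finset.univ.filter fun A =>
    (∀ i, (A i).Nonempty) ∧ (∀ i j, i ≠ j → Disjoint (A i) (A j)) ∧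
      Finset.univ.biUnion A = Finset.univ

/-- The CRP (α = 1) weight `p(A) = (1/(n!·t!)) ∏_i (|A_i| - 1)!` of an ordered partition
of `{1,…,n}` into `t` parts. -/
noncomputable def crpWeight {n t : ℕ} (A : Fin t → Finset (Fin n)) : ℝ :=
  (1 / ((n.factorial : ℝ) * (t.factorial : ℝ))) * ∏ i, (((A i).card - 1).factorial : ℝ)

/-- The joint law of the data and the number of clusters under the standard normal DPM
with concentration parameter `α = 1`:
`p(x, T_n = t) = ∑_{A ∈ 𝒜_t(n)} p(A) ∏_i m(x_{A_i})`. -/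
noncomputable def pJoint (n t : ℕ) (x : Fin n → ℝ) : ℝ :=
  ∑ A ∈ orderedPartitions n t, crpWeight A * ∏ i, clusterMarginal x (A i)

/-- The posterior probability of one cluster,
`p(T_n = 1 | x) = p(x, T_n = 1) / ∑_{t=1}^n p(x, T_n = t)`. -/
noncomputable def posteriorOne (n : ℕ) (x : Fin n → ℝ) : ℝ :=
  pJoint n 1 x / ∑ t ∈ Finset.Icc 1 n, pJoint n t x

section
variable {n : ℕ} (x : Fin n → ℝ)

lemma stdNormalPDF_pos (u : ℝ) : 0 < stdNormalPDF u := by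
  unfold stdNormalPDF
  have : 0 < Real.sqrt (2 * Real.pi) := Real.sqrt_pos.mpr (by positivity)
  positivity

lemma clusterMarginal_nonneg (S : Finset (Fin n)) : 0 ≤ clusterMarginal x S := by
  unfold clusterMarginal
  refine mul_nonneg (mul_nonneg (by positivity) ?_) (Real.exp_nonneg _)
  exact Finset.prod_nonneg fun j _ => (stdNormalPDF_pos (x j)).le

lemma crpWeight_nonneg {t : ℕ} (A : Fin t → Finset (Fin n)) : 0 ≤ crpWeight A := by
  unfold crpWeight; positivity

lemma pJoint_nonneg (t : ℕ) : 0 ≤ pJoint n t x := by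
  unfold pJoint
  refine Finset.sum_nonneg fun A _ => mul_nonneg (crpWeight_nonneg A) ?_
  exact Finset.prod_nonneg fun i _ => clusterMarginal_nonneg x _

lemma orderedPartitions_one (hn : 1 ≤ n) :
    orderedPartitions n 1 = {fun _ => (Finset.univ : Finset (Fin n))} := by
  ext A
  simp only [orderedPartitions, Finset.mem_filter, Finset.mem_univ, true_and,
    Finset.mem_singleton]
  constructor
  · rintro ⟨h1, h2, h3⟩
    funext i
    have : Finset.univ.biUnion A = A 0 := by
      rw [show (Finset.univ : Finset (Fin 1)) = {0} from rfl, Finset.singleton_biUnion]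
    rw [Fin.eq_zero i, ← this, h3]
  · rintro rfl
    refine ⟨fun i => ⟨⟨0, by omega⟩, Finset.mem_univ _⟩, fun i j hij => absurd (Subsingleton.elim i j) hij, ?_⟩
    simp

end

section
variable {m : ℕ} (x : Fin (m + 2) → ℝ)

lemma pJoint_one_eq : pJoint (m + 2) 1 x = ((m : ℝ) + 2)⁻¹ * clusterMarginal x Finset.univ := by
  rw [pJoint, orderedPartitions_one (by omega), Finset.sum_singleton]
  rw [Fin.prod_univ_one]
  congr 1
  rw [crpWeight, Fin.prod_univ_one, Finset.card_univ, Fintype.card_fin]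
  rw [show m + 2 - 1 = m + 1 from rfl, Nat.factorial_one,
    show (m+2).factorial = (m+2) * (m+1).factorial from rfl]
  have h1 : ((m+1).factorial : ℝ) ≠ 0 := Nat.cast_ne_zero.mpr (Nat.factorial_ne_zero _)
  push_cast
  field_simp

/-- The ordered partition `({j}, {j}ᶜ)`. -/
def splitPart {n : ℕ} (j : Fin n) : Fin 2 → Finset (Fin n) := ![{j}, {j}ᶜ]

lemma splitPart_mem (j : Fin (m + 2)) : splitPart j ∈ orderedPartitions (m + 2) 2 := by
  simp only [orderedPartitions, Finset.mem_filter, Finset.mem_univ, true_and]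
  refine ⟨?_, ?_, ?_⟩
  · intro i
    fin_cases i
    · exact Finset.singleton_nonempty j
    · rw [← Finset.card_pos]
      show 0 < ({j}ᶜ : Finset (Fin (m+2))).card
      rw [Finset.card_compl, Finset.card_singleton, Fintype.card_fin]
      omega
  · intro i k hik
    fin_cases i <;> fin_cases k <;> simp_all [splitPart]
  · ext a
    simp only [Finset.mem_biUnion, Finset.mem_univ, true_and, iff_true]
    by_cases h : a = j
    · exact ⟨0, by simp [splitPart, h]⟩
    · exact ⟨1, by simp [splitPart, h]⟩

lemma splitPart_inj : Function.Injective (splitPart (n := m + 2)) := by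
  intro j k h
  have := congrFun h 0
  simpa [splitPart] using this

lemma crpWeight_splitPart (j : Fin (m + 2)) :
    crpWeight (splitPart j) = (m.factorial : ℝ) / (2 * ((m+2).factorial : ℝ)) := by
  rw [crpWeight, Fin.prod_univ_two]
  simp only [splitPart, Matrix.cons_val_zero, Matrix.cons_val_one, Matrix.head_cons,
    Finset.card_singleton, Finset.card_compl, Fintype.card_fin]
  rw [show (1:ℕ) - 1 = 0 from rfl, show m + 2 - 1 - 1 = m from rfl,
    Nat.factorial_zero, Nat.factorial_two]
  push_cast
  ring

lemma clusterMarginal_singleton (j : Fin (m + 2)) :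
    clusterMarginal x {j} = (Real.sqrt 2)⁻¹ * stdNormalPDF (x j) * Real.exp ((x j)^2 / 4) := by
  rw [clusterMarginal, Finset.card_singleton, Finset.sum_singleton, Finset.prod_singleton]
  norm_num

lemma clusterMarginal_compl (j : Fin (m + 2)) :
    clusterMarginal x {j}ᶜ = (Real.sqrt ((m : ℝ) + 2))⁻¹ * (∏ k ∈ ({j}ᶜ : Finset (Fin (m+2))), stdNormalPDF (x k)) *
      Real.exp (((∑ k, x k) - x j)^2 / (2 * ((m : ℝ) + 2))) := by
  rw [clusterMarginal, Finset.card_compl, Finset.card_singleton, Fintype.card_fin]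
  have hsum : ∑ k ∈ ({j}ᶜ : Finset (Fin (m+2))), x k = (∑ k, x k) - x j := by
    have := Finset.sum_compl_add_sum ({j} : Finset (Fin (m+2))) x
    rw [Finset.sum_singleton] at this
    linarith
  rw [hsum]
  have : ((m + 2 - 1 : ℕ) : ℝ) + 1 = (m : ℝ) + 2 := by
    rw [show m + 2 - 1 = m + 1 from rfl]; push_cast; ring
  rw [this]

end

lemma quad_ineq (N a s : ℝ) (hN : 2 ≤ N) :
    s^2 / (2*(N+1)) - s^2 / (2*N^2) ≤ a^2/4 + (s-a)^2 / (2*N) := by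
  have hN0 : (0:ℝ) < N := by linarith
  have h1 : (0:ℝ) < 2*(N+1) := by linarith
  have h2 : (0:ℝ) < 2*N^2 := by positivity
  have h3 : (0:ℝ) < 2*N := by linarith
  rw [div_sub_div _ _ (ne_of_gt h1) (ne_of_gt h2),
    div_add_div _ _ (by norm_num : (4:ℝ) ≠ 0) (ne_of_gt h3),
    div_le_div_iff₀ (by positivity) (by positivity)]
  nlinarith [mul_nonneg (mul_nonneg hN0.le (by linarith : (0:ℝ) ≤ N+1)) (sq_nonneg ((N+2)*a - 2*s)),
    mul_nonneg (by linarith : (0:ℝ) ≤ 6*N+4) (sq_nonneg s), sq_nonneg s, sq_nonneg ((N+2)*a - 2*s),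
    (by linarith : (0:ℝ) < N+2)]

section
variable {m : ℕ} (x : Fin (m + 2) → ℝ)

lemma pJoint_two_ge :
    ∑ j : Fin (m+2), crpWeight (splitPart j) * ∏ i, clusterMarginal x (splitPart j i)
      ≤ pJoint (m + 2) 2 x := by
  rw [pJoint]
  have himg : ∑ A ∈ Finset.univ.image (splitPart (n := m+2)),
      (crpWeight A * ∏ i, clusterMarginal x (A i))
      = ∑ j : Fin (m+2), crpWeight (splitPart j) * ∏ i, clusterMarginal x (splitPart j i) :=
    Finset.sum_image (fun a _ b _ h => splitPart_inj h)
  rw [← himg]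
  refine Finset.sum_le_sum_of_subset_of_nonneg ?_ ?_
  · intro A hA
    rw [Finset.mem_image] at hA
    obtain ⟨j, _, rfl⟩ := hA
    exact splitPart_mem j
  · intro A _ _
    exact mul_nonneg (crpWeight_nonneg A) (Finset.prod_nonneg fun i _ => clusterMarginal_nonneg x _)

end

lemma scalar_ineq (N : ℝ) (hN : 2 ≤ N) :
    1/(2*Real.sqrt 2) * N⁻¹ * (Real.sqrt (N+1))⁻¹
      ≤ (2*(N-1))⁻¹ * ((Real.sqrt 2)⁻¹ * (Real.sqrt N)⁻¹) := by
  have hA : 0 < Real.sqrt 2 := Real.sqrt_pos.mpr (by norm_num)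
  have hB : 0 < Real.sqrt N := Real.sqrt_pos.mpr (by linarith)
  have hD : 0 < Real.sqrt (N+1) := Real.sqrt_pos.mpr (by linarith)
  have l1 : 1/(2*Real.sqrt 2) * N⁻¹ * (Real.sqrt (N+1))⁻¹
      = (2*Real.sqrt 2*N*Real.sqrt (N+1))⁻¹ := by
    rw [one_div, ← mul_inv, ← mul_inv]
  have l2 : (2*(N-1))⁻¹ * ((Real.sqrt 2)⁻¹ * (Real.sqrt N)⁻¹)
      = (2*(N-1)*Real.sqrt 2*Real.sqrt N)⁻¹ := by
    rw [← mul_inv, ← mul_inv]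
    congr 1
    ring
  rw [l1, l2]
  have hle : 2*(N-1)*Real.sqrt 2*Real.sqrt N ≤ 2*Real.sqrt 2*N*Real.sqrt (N+1) := by
    have h1 : Real.sqrt N ≤ Real.sqrt (N+1) := Real.sqrt_le_sqrt (by linarith)
    have h2 : (N-1) * Real.sqrt N ≤ N * Real.sqrt (N+1) :=
      mul_le_mul (by linarith) h1 hB.le (by linarith)
    nlinarith [hA, hB, hD]
  have hpos : 0 < 2*(N-1)*Real.sqrt 2*Real.sqrt N :=
    mul_pos (mul_pos (mul_pos two_pos (by linarith)) hA) hB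
  exact inv_anti₀ hpos hle


/-- For `n ≥ 2` and `x ∈ ℝⁿ`, the posterior probability of one cluster satisfies
`p(T_n = 1 | x) ≤ 1 / (1 + (1/(2√2)) exp(-x̄_n²/2))` where `x̄_n = (1/n) ∑_j x_j`. -/
theorem posterior_one_upper_bound (n : ℕ) (hn : 2 ≤ n) (x : Fin n → ℝ) :
    posteriorOne n x ≤
      1 / (1 + 1 / (2 * Real.sqrt 2) * Real.exp (-(((∑ j, x j) / n) ^ 2) / 2)) := by
  obtain ⟨m, rfl⟩ : ∃ m, n = m + 2 := ⟨n - 2, by omega⟩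
  clear hn
  push_cast
  set N : ℝ := (m : ℝ) + 2 with hNdef
  have hN : (2:ℝ) ≤ N := by
    have := Nat.cast_nonneg (α := ℝ) m
    rw [hNdef]; linarith
  have hN0 : (0:ℝ) < N := by linarith
  set s : ℝ := ∑ j, x j with hsdef
  set C : ℝ := ∏ j, stdNormalPDF (x j) with hCdef
  have hC : 0 < C := Finset.prod_pos fun j _ => stdNormalPDF_pos _
  set e : ℝ := Real.exp (-(s/N)^2/2) with hedef
  have he : 0 < e := by rw [hedef]; exact Real.exp_pos _
  set c : ℝ := 1/(2*Real.sqrt 2) * e with hcdef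
  have hA : 0 < Real.sqrt 2 := Real.sqrt_pos.mpr (by norm_num)
  have hc : 0 < c := by rw [hcdef]; positivity
  have hcast : ((m + 2 : ℕ) : ℝ) = N := by rw [hNdef]; push_cast; ring_nf
  set X : ℝ := Real.exp (s^2/(2*(N+1))) with hXdef
  have hX : 0 < X := by rw [hXdef]; exact Real.exp_pos _
  clear_value N s C e c X
  -- formula for pJoint 1
  have hP1 : pJoint (m+2) 1 x = N⁻¹ * ((Real.sqrt (N+1))⁻¹ * C * X) := by
    rw [pJoint_one_eq, clusterMarginal, Finset.card_univ, Fintype.card_fin, hcast]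
    rw [hXdef, hsdef, hCdef, hNdef]
  have hP1pos : 0 < pJoint (m+2) 1 x := by rw [hP1]; positivity
  -- lower bound for pJoint 2
  have hfact : (((m+2).factorial : ℕ) : ℝ) = N * (N-1) * (m.factorial : ℝ) := by
    rw [show (m+2).factorial = (m+2) * ((m+1) * m.factorial) from rfl, hNdef]
    push_cast; ring
  have hmfact : (0:ℝ) < (m.factorial : ℝ) := by positivity
  have key : c * pJoint (m+2) 1 x ≤ pJoint (m+2) 2 x := by
    refine le_trans ?_ (pJoint_two_ge x)
    set K0 : ℝ := (m.factorial : ℝ)/(2*((m+2).factorial : ℝ)) * ((Real.sqrt 2)⁻¹ * (Real.sqrt N)⁻¹)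
      with hK0def
    have hK0 : 0 ≤ K0 := by rw [hK0def]; positivity
    have hterm : ∀ j : Fin (m+2),
        K0 * (C * (X * e)) ≤ crpWeight (splitPart j) * ∏ i, clusterMarginal x (splitPart j i) := by
      intro j
      have h0 : splitPart j 0 = {j} := rfl
      have h1 : splitPart j 1 = ({j}ᶜ : Finset (Fin (m+2))) := rfl
      rw [Fin.prod_univ_two, h0, h1, clusterMarginal_singleton, clusterMarginal_compl,
        crpWeight_splitPart, ← hsdef]
      have hCprod : stdNormalPDF (x j) * ∏ k ∈ ({j}ᶜ : Finset (Fin (m+2))), stdNormalPDF (x k) = C := by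
        rw [hCdef, ← Finset.prod_mul_prod_compl ({j} : Finset (Fin (m+2))), Finset.prod_singleton]
      have hquad : X * e ≤ Real.exp ((x j)^2/4 + (s - x j)^2/(2*N)) := by
        have h2 : -((s/N)^2)/2 = -(s^2/(2*N^2)) := by
          rw [div_pow, neg_div, div_div, mul_comm (N^2) 2]
        rw [hXdef, hedef, ← Real.exp_add, h2]
        apply Real.exp_le_exp.mpr
        have := quad_ineq N (x j) s hN
        linarith
      calc K0 * (C * (X * e))
          ≤ K0 * (C * Real.exp ((x j)^2/4 + (s - x j)^2/(2*N))) :=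
            mul_le_mul_of_nonneg_left (mul_le_mul_of_nonneg_left hquad hC.le) hK0
        _ = _ := by rw [hK0def, ← hCprod, Real.exp_add, hNdef]; ring
    calc c * pJoint (m+2) 1 x ≤ ((m+2:ℕ):ℝ) * (K0 * (C * (X * e))) := by
          rw [hcast, hP1]
          have hscal := scalar_ineq N hN
          have hK0eq : N * K0 = (2*(N-1))⁻¹ * ((Real.sqrt 2)⁻¹ * (Real.sqrt N)⁻¹) := by
            rw [hK0def, hfact, ← mul_assoc]
            congr 1
            have hN1 : N - 1 ≠ 0 := by linarith
            field_simp
          have hfinal : c * (N⁻¹ * ((Real.sqrt (N+1))⁻¹ * C * X))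
              = (1/(2*Real.sqrt 2) * N⁻¹ * (Real.sqrt (N+1))⁻¹) * (C * (X * e)) := by
            rw [hcdef]; ring
          rw [hfinal, show N * (K0 * (C * (X * e))) = (N * K0) * (C * (X * e)) from by ring,
            hK0eq]
          exact mul_le_mul_of_nonneg_right hscal (mul_nonneg hC.le (mul_nonneg hX.le he.le))
      _ ≤ ∑ j : Fin (m+2), crpWeight (splitPart j) * ∏ i, clusterMarginal x (splitPart j i) := by
          have hsum := Finset.sum_le_sum (fun j (_ : j ∈ Finset.univ) => hterm j)
          rw [Finset.sum_const, Finset.card_univ, Fintype.card_fin, nsmul_eq_mul] at hsum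
          exact hsum
  -- assemble
  have hsub : pJoint (m+2) 1 x + pJoint (m+2) 2 x ≤ ∑ t ∈ Finset.Icc 1 (m+2), pJoint (m+2) t x := by
    have h12 : ({1, 2} : Finset ℕ) ⊆ Finset.Icc 1 (m+2) := by
      intro t ht
      simp only [Finset.mem_insert, Finset.mem_singleton] at ht
      rw [Finset.mem_Icc]
      omega
    calc pJoint (m+2) 1 x + pJoint (m+2) 2 x
        = ∑ t ∈ ({1, 2} : Finset ℕ), pJoint (m+2) t x := by
          rw [Finset.sum_pair (by norm_num)]
      _ ≤ _ := Finset.sum_le_sum_of_subset_of_nonneg h12 fun t _ _ => pJoint_nonneg x t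
  have h1c : 0 < 1 + c := by linarith
  have hstep : pJoint (m+2) 1 x * (1 + c) ≤ ∑ t ∈ Finset.Icc 1 (m+2), pJoint (m+2) t x := by
    have hexp : pJoint (m+2) 1 x * (1 + c) = pJoint (m+2) 1 x + c * pJoint (m+2) 1 x := by ring
    rw [hexp]
    linarith
  rw [posteriorOne]
  calc pJoint (m+2) 1 x / (∑ t ∈ Finset.Icc 1 (m+2), pJoint (m+2) t x)
      ≤ pJoint (m+2) 1 x / (pJoint (m+2) 1 x * (1 + c)) :=
        div_le_div_of_nonneg_left hP1pos.le (mul_pos hP1pos h1c) hstep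
    _ = 1 / (1 + c) := by
        rw [div_mul_eq_div_div, div_self (ne_of_gt hP1pos)]
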